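/- Let 𝒲, 𝒴_1, …, 𝒴_n, 𝒞 be finite nonempty types. Let μ be a pmf on 𝒲; for each t ∈ {1,…,n} and each w ∈ 𝒲 let κ_t(·|w) be a pmf on 𝒴_t; and for each (w,y) ∈ 𝒲 × Π_t 𝒴_t let ν(·|w,y) be a pmf on 𝒞. Consider the joint pmf q(w,y,c) = μ(w) · ( Π_{t=1}^n κ_t(y_t|w) ) · ν(c|w,y), so that Y_1, …, Y_n are conditionally independent given W. Then the conditional mutual informations induced by q satisfy I( C ; (Y_1,…,Y_n) | W ) ≥ Σ_{t=1}^n I( C ; Y_t | W ). -/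

import Mathlib

open scoped Classical

/-- Probability of an event under a finitely supported distribution. -/
noncomputable def prOf {Ω : Type*} [Fintype Ω] (q : Ω → ℝ) (s : Set Ω) : ℝ :=
  ∑ ω, if ω ∈ s then q ω else 0

/-- Conditional mutual information `I(f(ω); g(ω) | h(ω))` of the random
variables `f`, `g`, `h` under the joint pmf `q` on the finite sample space `Ω`:
`∑_{a,b,c} q(a,b,c) log( q(a,b,c) q_C(c) / (q_{AC}(a,c) q_{BC}(b,c)) )`,
written as a sum over `ω` (terms with `q ω = 0` contribute `0`). -/
noncomputable def condMI {Ω A B C : Type*} [Fintype Ω]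
    (q : Ω → ℝ) (f : Ω → A) (g : Ω → B) (h : Ω → C) : ℝ :=
  ∑ ω, q ω * Real.log
    ((prOf q {ω' | f ω' = f ω ∧ g ω' = g ω ∧ h ω' = h ω} *
        prOf q {ω' | h ω' = h ω}) /
      (prOf q {ω' | f ω' = f ω ∧ h ω' = h ω} *
        prOf q {ω' | g ω' = g ω ∧ h ω' = h ω}))

/-! ### Auxiliary definitions and lemmas -/

set_option maxHeartbeats 1000000

/-- Marginal `q(w, c)` of the joint pmf. -/
noncomputable def margP {Wt C : Type*} {n : ℕ} {Y : Fin n → Type*}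
    [∀ t, Fintype (Y t)] (q : Wt × (∀ t, Y t) × C → ℝ) (w : Wt) (c : C) : ℝ :=
  ∑ y, q (w, y, c)

/-- Marginal `q(w, y_t, c)` of the joint pmf. -/
noncomputable def margM {Wt C : Type*} {n : ℕ} {Y : Fin n → Type*}
    [∀ t, Fintype (Y t)] (q : Wt × (∀ t, Y t) × C → ℝ)
    (t : Fin n) (w : Wt) (z : Y t) (c : C) : ℝ :=
  ∑ y, if y t = z then q (w, y, c) else 0

/-- The auxiliary pmf `p(w,y,c) = q(w,c) ∏_t q(y_t | w,c)`. -/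
noncomputable def pA {Wt C : Type*} {n : ℕ} {Y : Fin n → Type*}
    [∀ t, Fintype (Y t)] (q : Wt × (∀ t, Y t) × C → ℝ)
    (ω : Wt × (∀ t, Y t) × C) : ℝ :=
  margP q ω.1 ω.2.2 * (∏ t, margM q t ω.1 (ω.2.1 t) ω.2.2) / margP q ω.1 ω.2.2 ^ n

lemma aux_sum_ite_pi {n : ℕ} {Y : Fin n → Type*} [∀ t, Fintype (Y t)]
    (f : ∀ t, Y t → ℝ) (h1 : ∀ s, ∑ v, f s v = 1) (t : Fin n) (z : Y t) :
    ∑ y : ∀ s, Y s, (if y t = z then ∏ s, f s (y s) else 0) = f t z := by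
  classical
  set G : ∀ s, Y s → ℝ := Function.update f t (fun v => if v = z then f t v else 0) with hG
  have key : ∀ y : ∀ s, Y s,
      (if y t = z then ∏ s, f s (y s) else 0) = ∏ s, G s (y s) := by
    intro y
    by_cases h : y t = z
    · rw [if_pos h]
      refine Finset.prod_congr rfl fun s _ => ?_
      by_cases hs : s = t
      · subst hs; simp [hG, Function.update_self, h]
      · simp [hG, Function.update_of_ne hs]
    · rw [if_neg h]
      refine (Finset.prod_eq_zero (Finset.mem_univ t) ?_).symm
      simp [hG, Function.update_self, h]
  calc ∑ y : ∀ s, Y s, (if y t = z then ∏ s, f s (y s) else 0)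
      = ∑ y : ∀ s, Y s, ∏ s, G s (y s) := Finset.sum_congr rfl fun y _ => key y
    _ = ∏ s, ∑ v, G s v := (Fintype.prod_sum (fun s v => G s v)).symm
    _ = f t z := by
        rw [Finset.prod_eq_single t]
        · simp [hG, Function.update_self]
        · intro s _ hs; simp [hG, Function.update_of_ne hs, h1 s]
        · simp

section facts
variable {Wt C : Type*} {n : ℕ} {Y : Fin n → Type*} [∀ t, Fintype (Y t)]
  {q : Wt × (∀ t, Y t) × C → ℝ}

lemma margP_nonneg (h0 : ∀ ω, 0 ≤ q ω) (w : Wt) (c : C) : 0 ≤ margP q w c :=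
  Finset.sum_nonneg fun y _ => h0 (w, y, c)

lemma margM_nonneg (h0 : ∀ ω, 0 ≤ q ω) (t : Fin n) (w : Wt) (z : Y t) (c : C) :
    0 ≤ margM q t w z c :=
  Finset.sum_nonneg fun y _ => by by_cases h : y t = z <;> simp [margM, h, h0 (w, y, c)]

lemma q_le_margP (h0 : ∀ ω, 0 ≤ q ω) (w : Wt) (y : ∀ t, Y t) (c : C) :
    q (w, y, c) ≤ margP q w c :=
  Finset.single_le_sum (fun y' _ => h0 (w, y', c)) (Finset.mem_univ y)

lemma q_le_margM (h0 : ∀ ω, 0 ≤ q ω) (t : Fin n) (w : Wt) (y : ∀ t, Y t) (c : C) :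
    q (w, y, c) ≤ margM q t w (y t) c := by
  have := Finset.single_le_sum (f := fun y' => if y' t = y t then q (w, y', c) else 0)
    (fun y' _ => by by_cases h : y' t = y t <;> simp [h, h0 (w, y', c)]) (Finset.mem_univ y)
  simpa [margM] using this

lemma sum_margM (t : Fin n) (w : Wt) (c : C) :
    ∑ z, margM q t w z c = margP q w c := by
  rw [margP]
  simp only [margM]
  rw [Finset.sum_comm]
  refine Finset.sum_congr rfl fun y _ => ?_
  simp [Finset.sum_ite_eq]

lemma pA_nonneg (h0 : ∀ ω, 0 ≤ q ω) (ω : Wt × (∀ t, Y t) × C) : 0 ≤ pA q ω := by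
  obtain ⟨w, y, c⟩ := ω
  exact div_nonneg (mul_nonneg (margP_nonneg h0 w c)
    (Finset.prod_nonneg fun t _ => margM_nonneg h0 t w (y t) c))
    (pow_nonneg (margP_nonneg h0 w c) n)

lemma pA_pos (h0 : ∀ ω, 0 ≤ q ω) {ω : Wt × (∀ t, Y t) × C} (hω : 0 < q ω) :
    0 < pA q ω := by
  obtain ⟨w, y, c⟩ := ω
  have hP : 0 < margP q w c := lt_of_lt_of_le hω (q_le_margP h0 w y c)
  have hm : ∀ t, 0 < margM q t w (y t) c := fun t =>
    lt_of_lt_of_le hω (q_le_margM h0 t w y c)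
  exact div_pos (mul_pos hP (Finset.prod_pos fun t _ => hm t)) (pow_pos hP n)

lemma sum_pA [Fintype Wt] [Fintype C] : ∑ ω, pA q ω = ∑ ω, q ω := by
  rw [Fintype.sum_prod_type, Fintype.sum_prod_type]
  simp only [Fintype.sum_prod_type]
  refine Finset.sum_congr rfl fun w _ => ?_
  rw [Finset.sum_comm]
  have inner : ∀ c : C, (∑ y : ∀ t, Y t, pA q (w, y, c)) = margP q w c := by
    intro c
    simp only [pA]
    rw [← Finset.sum_div, ← Finset.mul_sum,
      show (∑ y : ∀ t, Y t, ∏ t, margM q t w (y t) c) = ∏ t, ∑ z, margM q t w z c from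
        (Fintype.prod_sum (fun t z => margM q t w z c)).symm]
    simp only [sum_margM]
    rw [Finset.prod_const, Finset.card_univ, Fintype.card_fin]
    by_cases hP : margP q w c = 0
    · simp [hP]
    · rw [mul_div_assoc, div_self (pow_ne_zero _ hP), mul_one]
  rw [Finset.sum_congr rfl fun c _ => inner c]
  unfold margP
  exact Finset.sum_comm (f := fun c y => q (w, y, c))

end facts

section marg
variable {Wt C : Type*} {n : ℕ} {Y : Fin n → Type*}
  [Fintype Wt] [Fintype C] [∀ t, Fintype (Y t)]
  {μ : Wt → ℝ} {κ : ∀ t, Wt → Y t → ℝ} {ν : Wt → (∀ t, Y t) → C → ℝ}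
  {q : Wt × (∀ t, Y t) × C → ℝ}

lemma Mcw (c : C) (w : Wt) :
    prOf q {ω' | ω'.2.2 = c ∧ ω'.1 = w} = margP q w c := by
  simp only [prOf, Set.mem_setOf_eq, Fintype.sum_prod_type]
  rw [Finset.sum_eq_single w (fun b _ hb => by simp [hb]) (by simp)]
  simp only [margP, eq_self_iff_true, and_true]
  refine Finset.sum_congr rfl fun y _ => ?_
  simp [Finset.sum_ite_eq']

lemma Mcyw (w : Wt) (y : ∀ t, Y t) (c : C) :
    prOf q {ω' | ω'.2.2 = c ∧ ω'.2.1 = y ∧ ω'.1 = w} = q (w, y, c) := by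
  simp only [prOf, Set.mem_setOf_eq, Fintype.sum_prod_type]
  rw [Finset.sum_eq_single w (fun b _ hb => by simp [hb]) (by simp)]
  simp only [eq_self_iff_true, and_true]
  rw [Finset.sum_eq_single y (fun b _ hb => by simp [hb]) (by simp)]
  simp [Finset.sum_ite_eq']

lemma Mtcyw (t : Fin n) (c : C) (z : Y t) (w : Wt) :
    prOf q {ω' | ω'.2.2 = c ∧ ω'.2.1 t = z ∧ ω'.1 = w} = margM q t w z c := by
  simp only [prOf, Set.mem_setOf_eq, Fintype.sum_prod_type]
  rw [Finset.sum_eq_single w (fun b _ hb => by simp [hb]) (by simp)]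
  simp only [margM, eq_self_iff_true, and_true]
  refine Finset.sum_congr rfl fun y _ => ?_
  by_cases h : y t = z
  · simp [h, Finset.sum_ite_eq']
  · simp [h]

section withq
variable (hq : ∀ w y c, q (w, y, c) = μ w * (∏ t, κ t w (y t)) * ν w y c)
  (hκ1 : ∀ t w, ∑ y, κ t w y = 1) (hν1 : ∀ w y, ∑ c, ν w y c = 1)
include hq hν1

lemma hsumc (w : Wt) (y : ∀ t, Y t) :
    ∑ c, q (w, y, c) = μ w * ∏ t, κ t w (y t) := by
  simp only [hq]
  rw [← Finset.mul_sum, hν1, mul_one]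

lemma Myw (y : ∀ t, Y t) (w : Wt) :
    prOf q {ω' | ω'.2.1 = y ∧ ω'.1 = w} = μ w * ∏ t, κ t w (y t) := by
  simp only [prOf, Set.mem_setOf_eq, Fintype.sum_prod_type]
  rw [Finset.sum_eq_single w (fun b _ hb => by simp [hb]) (by simp)]
  simp only [eq_self_iff_true, and_true]
  rw [Finset.sum_eq_single y (fun b _ hb => by simp [hb]) (by simp)]
  simpa using hsumc hq hν1 w y

include hκ1

lemma Mw (w : Wt) : prOf q {ω' | ω'.1 = w} = μ w := by
  simp only [prOf, Set.mem_setOf_eq, Fintype.sum_prod_type]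
  rw [Finset.sum_eq_single w (fun b _ hb => by simp [hb]) (by simp)]
  simp only [eq_self_iff_true, if_true]
  rw [Finset.sum_congr rfl fun y _ => hsumc hq hν1 w y, ← Finset.mul_sum,
    show (∑ i : ∀ t, Y t, ∏ t, κ t w (i t)) = ∏ t, ∑ z, κ t w z from
      (Fintype.prod_sum (fun t z => κ t w z)).symm]
  simp [hκ1]

lemma Mtyw (t : Fin n) (z : Y t) (w : Wt) :
    prOf q {ω' | ω'.2.1 t = z ∧ ω'.1 = w} = μ w * κ t w z := by
  simp only [prOf, Set.mem_setOf_eq, Fintype.sum_prod_type]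
  rw [Finset.sum_eq_single w (fun b _ hb => by simp [hb]) (by simp)]
  simp only [eq_self_iff_true, and_true]
  have step : ∀ y : ∀ t, Y t, (∑ b, if y t = z then q (w, y, b) else 0)
      = if y t = z then μ w * ∏ s, κ s w (y s) else 0 := by
    intro y
    by_cases h : y t = z
    · simp only [h, if_true]; exact hsumc hq hν1 w y
    · simp [h]
  rw [Finset.sum_congr rfl fun y _ => step y]
  have key := aux_sum_ite_pi (fun s => κ s w) (fun s => hκ1 s w) t z
  calc (∑ y : ∀ s, Y s, if y t = z then μ w * ∏ s, κ s w (y s) else 0)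
      = μ w * ∑ y : ∀ s, Y s, (if y t = z then ∏ s, κ s w (y s) else 0) := by
        rw [Finset.mul_sum]
        refine Finset.sum_congr rfl fun y _ => ?_
        by_cases h : y t = z <;> simp [h]
    _ = μ w * κ t w z := by rw [key]

end withq
end marg

/-- if `Y₁, …, Yₙ` are conditionally independent given `W` under
the joint pmf `q(w,y,c) = μ(w) ∏ t κ_t(y_t|w) ν(c|w,y)`, then
`I(C; (Y₁,…,Yₙ) | W) ≥ ∑ t, I(C; Y_t | W)`. -/
theorem stmt17 {Wt C : Type*} (n : ℕ) (Y : Fin n → Type*)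
    [Fintype Wt] [Fintype C] [∀ t, Fintype (Y t)]
    [Nonempty Wt] [Nonempty C] [∀ t, Nonempty (Y t)]
    (μ : Wt → ℝ) (hμ0 : ∀ w, 0 ≤ μ w) (hμ1 : ∑ w, μ w = 1)
    (κ : ∀ t, Wt → Y t → ℝ) (hκ0 : ∀ t w y, 0 ≤ κ t w y) (hκ1 : ∀ t w, ∑ y, κ t w y = 1)
    (ν : Wt → (∀ t, Y t) → C → ℝ)
    (hν0 : ∀ w y c, 0 ≤ ν w y c) (hν1 : ∀ w y, ∑ c, ν w y c = 1)
    (q : Wt × (∀ t, Y t) × C → ℝ)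
    (hq : ∀ w y c, q (w, y, c) = μ w * (∏ t, κ t w (y t)) * ν w y c) :
    (∑ t, condMI q (fun ω => ω.2.2) (fun ω => ω.2.1 t) (fun ω => ω.1)) ≤
      condMI q (fun ω => ω.2.2) (fun ω => ω.2.1) (fun ω => ω.1) := by
  classical
  have hq0 : ∀ ω : Wt × (∀ t, Y t) × C, 0 ≤ q ω := by
    rintro ⟨w, y, c⟩
    rw [hq]
    exact mul_nonneg (mul_nonneg (hμ0 w)
      (Finset.prod_nonneg fun t _ => hκ0 t w (y t))) (hν0 w y c)
  have hqsum : ∑ ω, q ω = 1 := by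
    rw [Fintype.sum_prod_type]
    simp only [Fintype.sum_prod_type]
    calc ∑ w, ∑ y, ∑ c, q (w, y, c)
        = ∑ w, ∑ y : ∀ t, Y t, (μ w * ∏ t, κ t w (y t)) :=
          Finset.sum_congr rfl fun w _ => Finset.sum_congr rfl fun y _ => hsumc hq hν1 w y
      _ = ∑ w, μ w := by
          refine Finset.sum_congr rfl fun w _ => ?_
          rw [← Finset.mul_sum,
            show (∑ i : ∀ t, Y t, ∏ t, κ t w (i t)) = ∏ t, ∑ z, κ t w z from
              (Fintype.prod_sum (fun t z => κ t w z)).symm]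
          simp [hκ1]
      _ = 1 := hμ1
  have hpasum : ∑ ω, pA q ω = 1 := by rw [sum_pA, hqsum]
  rw [← sub_nonneg]
  have hdiff : condMI q (fun ω => ω.2.2) (fun ω => ω.2.1) (fun ω => ω.1) -
      (∑ t, condMI q (fun ω => ω.2.2) (fun ω => ω.2.1 t) (fun ω => ω.1)) =
      ∑ ω, q ω * Real.log (q ω / pA q ω) := by
    simp only [condMI]
    rw [Finset.sum_comm, ← Finset.sum_sub_distrib]
    refine Finset.sum_congr rfl ?_
    rintro ⟨w, y, c⟩ -
    dsimp only
    simp only [Mcyw, Mw hq hκ1 hν1, Mcw, Myw hq hν1, Mtyw hq hκ1 hν1, Mtcyw]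
    by_cases hzero : q (w, y, c) = 0
    · simp [hzero]
    · have hpos : 0 < q (w, y, c) := (hq0 (w, y, c)).lt_of_ne (Ne.symm hzero)
      have hμw : 0 < μ w := by
        rcases (hμ0 w).lt_or_eq with h | h
        · exact h
        · exfalso; rw [hq, ← h, zero_mul, zero_mul] at hpos; exact lt_irrefl 0 hpos
      have hκp : ∀ t, 0 < κ t w (y t) := by
        intro t
        rcases (hκ0 t w (y t)).lt_or_eq with h | h
        · exact h
        · exfalso
          have hz : (∏ s, κ s w (y s)) = 0 :=
            Finset.prod_eq_zero (Finset.mem_univ t) h.symm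
          rw [hq, hz, mul_zero, zero_mul] at hpos; exact lt_irrefl 0 hpos
      have hprod : 0 < ∏ t, κ t w (y t) := Finset.prod_pos fun t _ => hκp t
      have hP : 0 < margP q w c := lt_of_lt_of_le hpos (q_le_margP hq0 w y c)
      have hm : ∀ t, 0 < margM q t w (y t) c := fun t =>
        lt_of_lt_of_le hpos (q_le_margM hq0 t w y c)
      have hpa : 0 < pA q (w, y, c) := pA_pos hq0 hpos
      have e1 : Real.log (q (w, y, c) * μ w / (margP q w c * (μ w * ∏ t, κ t w (y t))))
          = Real.log (q (w, y, c)) - Real.log (margP q w c)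
            - ∑ t, Real.log (κ t w (y t)) := by
        rw [Real.log_div (mul_pos hpos hμw).ne' (mul_pos hP (mul_pos hμw hprod)).ne',
            Real.log_mul hpos.ne' hμw.ne',
            Real.log_mul hP.ne' (mul_pos hμw hprod).ne',
            Real.log_mul hμw.ne' hprod.ne',
            Real.log_prod (fun t _ => (hκp t).ne')]
        ring
      have e2 : ∀ t, Real.log
            (margM q t w (y t) c * μ w / (margP q w c * (μ w * κ t w (y t))))
          = Real.log (margM q t w (y t) c) - Real.log (margP q w c)
            - Real.log (κ t w (y t)) := by
        intro t
        rw [Real.log_div (mul_pos (hm t) hμw).ne' (mul_pos hP (mul_pos hμw (hκp t))).ne',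
            Real.log_mul (hm t).ne' hμw.ne',
            Real.log_mul hP.ne' (mul_pos hμw (hκp t)).ne',
            Real.log_mul hμw.ne' (hκp t).ne']
        ring
      have e3 : Real.log (q (w, y, c) / pA q (w, y, c))
          = Real.log (q (w, y, c)) - Real.log (margP q w c)
            - (∑ t, Real.log (margM q t w (y t) c)) + n * Real.log (margP q w c) := by
        have hpA : pA q (w, y, c)
            = margP q w c * (∏ t, margM q t w (y t) c) / margP q w c ^ n := rfl
        rw [Real.log_div hpos.ne' hpa.ne', hpA,
            Real.log_div (mul_pos hP (Finset.prod_pos fun t _ => hm t)).ne'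
              (pow_pos hP n).ne',
            Real.log_mul hP.ne' (Finset.prod_pos fun t _ => hm t).ne',
            Real.log_prod (fun t _ => (hm t).ne'),
            Real.log_pow]
        ring
      rw [e1, e3]
      simp only [e2]
      rw [← Finset.mul_sum]
      simp only [Finset.sum_sub_distrib, Finset.sum_const, Finset.card_univ,
        Fintype.card_fin, nsmul_eq_mul]
      ring
  rw [hdiff]
  have hbound : ∀ ω, q ω - pA q ω ≤ q ω * Real.log (q ω / pA q ω) := by
    intro ω
    by_cases h : q ω = 0
    · rw [h, zero_mul, zero_sub]
      exact neg_nonpos.mpr (pA_nonneg hq0 ω)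
    · have hq' : 0 < q ω := (hq0 ω).lt_of_ne (Ne.symm h)
      have hp' : 0 < pA q ω := pA_pos hq0 hq'
      have key := Real.log_le_sub_one_of_pos (div_pos hp' hq')
      have h3 := mul_le_mul_of_nonneg_left key hq'.le
      have h4 : q ω * (pA q ω / q ω) = pA q ω := by field_simp
      rw [mul_sub, h4, mul_one] at h3
      have h5 : Real.log (q ω / pA q ω) = - Real.log (pA q ω / q ω) := by
        rw [Real.log_div hq'.ne' hp'.ne', Real.log_div hp'.ne' hq'.ne']; ring
      rw [h5, mul_neg]
      linarith
  calc (0:ℝ) = ∑ ω, (q ω - pA q ω) := by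
        rw [Finset.sum_sub_distrib, hqsum, hpasum, sub_self]
    _ ≤ ∑ ω, q ω * Real.log (q ω / pA q ω) := Finset.sum_le_sum fun ω _ => hbound ω
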